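/- Let (f_n)_{n≥1} be a sequence of monotone continuous maps from [0,a] to itself with f_n(0) = 0 for all n, and suppose there exists β > 0 such that each f_n is βγ_n-concave, where γ_n = sup f_n (i.e. x ↦ f_n(x) + βγ_n x² is concave). For x₀, y₀ ∈ (0,a] define x_n = f_n(x_{n-1}) and y_n = f_n(y_{n-1}). Then |x_n - y_n| → 0 as n → ∞. -/

import Mathlib

open Set

private lemma conc_ineq {a α : ℝ} {g : ℝ → ℝ} (hg0 : g 0 = 0)
    (hconc : ConcaveOn ℝ (Icc 0 a) (fun x => g x + α * x ^ 2))
    {u v : ℝ} (hu : 0 ≤ u) (huv : u ≤ v) (hva : v ≤ a) (hv : 0 < v) :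
    (u / v) * g v + α * u * (v - u) ≤ g u := by
  have h0 : (0:ℝ) ∈ Icc 0 a := ⟨le_refl 0, le_trans (hu.trans huv) hva⟩
  have hvI : v ∈ Icc 0 a := ⟨hv.le, hva⟩
  have ht0 : 0 ≤ u / v := div_nonneg hu hv.le
  have ht1 : u / v ≤ 1 := div_le_one_of_le₀ huv hv.le
  have h := hconc.2 hvI h0 ht0 (show (0:ℝ) ≤ 1 - u / v by linarith)
    (by ring)
  have htv : (u / v) * v = u := div_mul_cancel₀ u hv.ne'
  simp only [smul_eq_mul, mul_zero, add_zero, htv, hg0] at h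
  have h3 : u / v * (α * v ^ 2) = α * (u * v) := by
    field_simp
  linarith [h, h3]

private lemma aux_contraction (a β : ℝ) (ha : 0 < a) (hβ : 0 < β)
    (f : ℕ → ℝ → ℝ)
    (hmap : ∀ n, MapsTo (f n) (Icc 0 a) (Icc 0 a))
    (hmono : ∀ n, MonotoneOn (f n) (Icc 0 a))
    (hf0 : ∀ n, f n 0 = 0)
    (hconc : ∀ n, ConcaveOn ℝ (Icc 0 a)
      (fun x => f n x + β * sSup (f n '' Icc 0 a) * x ^ 2))
    (x y : ℕ → ℝ) (hx0 : x 0 ∈ Ioc (0:ℝ) a) (hy0 : y 0 ∈ Ioc (0:ℝ) a)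
    (hxs : ∀ n, x (n + 1) = f (n + 1) (x n))
    (hys : ∀ n, y (n + 1) = f (n + 1) (y n))
    (hxy0 : x 0 ≤ y 0) :
    Filter.Tendsto (fun n => |x n - y n|) Filter.atTop (nhds 0) := by
  -- membership
  have hxI : ∀ n, x n ∈ Icc 0 a := by
    intro n
    induction n with
    | zero => exact ⟨hx0.1.le, hx0.2⟩
    | succ n ih => rw [hxs n]; exact hmap (n+1) ih
  have hyI : ∀ n, y n ∈ Icc 0 a := by
    intro n
    induction n with
    | zero => exact ⟨hy0.1.le, hy0.2⟩
    | succ n ih => rw [hys n]; exact hmap (n+1) ih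
  -- order
  have hle : ∀ n, x n ≤ y n := by
    intro n
    induction n with
    | zero => exact hxy0
    | succ n ih => rw [hxs n, hys n]; exact hmono (n+1) (hxI n) (hyI n) ih
  by_cases hpos : ∀ n, 0 < y n
  · -- main case
    have hγ : ∀ n z, z ∈ Icc 0 a → f n z ≤ sSup (f n '' Icc 0 a) := by
      intro n z hz
      apply le_csSup
      · exact (bddAbove_Icc.mono ((hmap n).image_subset))
      · exact mem_image_of_mem _ hz
    -- positivity of x
    have hxpos : ∀ n, 0 < x n := by
      intro n
      induction n with
      | zero => exact hx0.1
      | succ n ih =>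
        have hkey := conc_ineq (hf0 (n+1)) (hconc (n+1)) (hxI n).1 (hle n)
          (hyI n).2 (hpos n)
        rw [← hxs n, ← hys n] at hkey
        have hyn1 : 0 < y (n+1) := hpos (n+1)
        have hγn : 0 ≤ sSup (f (n+1) '' Icc 0 a) := by
          have := hγ (n+1) (y n) (hyI n)
          rw [← hys n] at this; linarith
        have h1 : 0 < x n / y n := div_pos ih (hpos n)
        nlinarith [mul_nonneg (mul_nonneg (mul_nonneg hβ.le hγn) (hxI n).1)
          (sub_nonneg.mpr (hle n)), mul_pos h1 hyn1]
    -- key ratio inequality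
    have key : ∀ n, x n / y n + β * (x n * (y n - x n)) ≤ x (n+1) / y (n+1) := by
      intro n
      have hkey := conc_ineq (hf0 (n+1)) (hconc (n+1)) (hxI n).1 (hle n)
        (hyI n).2 (hpos n)
      rw [← hxs n, ← hys n] at hkey
      have hyn1 : 0 < y (n+1) := hpos (n+1)
      have hγn : y (n+1) ≤ sSup (f (n+1) '' Icc 0 a) := by
        have := hγ (n+1) (y n) (hyI n)
        rwa [← hys n] at this
      rw [le_div_iff₀ hyn1]
      nlinarith [mul_nonneg (mul_nonneg (mul_nonneg hβ.le (hxI n).1)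
        (sub_nonneg.mpr (hle n))) (sub_nonneg.mpr hγn)]
    set r : ℕ → ℝ := fun n => x n / y n with hr
    have hrmono : Monotone r := by
      apply monotone_nat_of_le_succ
      intro n
      have := key n
      have h2 : 0 ≤ β * (x n * (y n - x n)) :=
        mul_nonneg hβ.le (mul_nonneg (hxpos n).le (sub_nonneg.mpr (hle n)))
      simp only [hr]; linarith
    have hrbdd : BddAbove (Set.range r) := by
      refine ⟨1, ?_⟩
      rintro _ ⟨n, rfl⟩
      exact div_le_one_of_le₀ (hle n) (hpos n).le
    have hrlim := tendsto_atTop_ciSup hrmono hrbdd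
    have hrlim' : Filter.Tendsto (fun n => r (n+1)) Filter.atTop
        (nhds (⨆ n, r n)) :=
      hrlim.comp (Filter.tendsto_add_atTop_nat 1)
    have hdlim : Filter.Tendsto (fun n => r (n+1) - r n) Filter.atTop (nhds 0) := by
      have := hrlim'.sub hrlim
      simpa using this
    have hr0pos : 0 < r 0 := div_pos hx0.1 (hpos 0)
    -- x n ≥ r 0 * y n
    have hxlow : ∀ n, r 0 * y n ≤ x n := by
      intro n
      have : r 0 ≤ r n := hrmono (Nat.zero_le n)
      rw [hr] at this
      simp only at this
      calc r 0 * y n ≤ x n / y n * y n := by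
            apply mul_le_mul_of_nonneg_right this (hpos n).le
        _ = x n := div_mul_cancel₀ _ (hpos n).ne'
    -- squeeze (y n - x n)^2 → 0
    have hsq : Filter.Tendsto (fun n => (y n - x n)^2) Filter.atTop (nhds 0) := by
      apply squeeze_zero (fun n => sq_nonneg _) (g := fun n =>
        (1 / (β * r 0)) * (r (n+1) - r n))
      · intro n
        have h1 : β * (x n * (y n - x n)) ≤ r (n+1) - r n := by
          have := key n; simp only [hr]; linarith
        have h3 := hxlow n
        have h4 : 0 ≤ y n - x n := sub_nonneg.mpr (hle n)
        have h5 : y n - x n ≤ y n := by have := (hxI n).1; linarith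
        have h6 : r 0 * (y n - x n)^2 ≤ x n * (y n - x n) := by
          nlinarith [mul_le_mul_of_nonneg_right h3 h4,
            mul_le_mul_of_nonneg_right h5 h4, hr0pos.le]
        have h7 : β * (r 0 * (y n - x n)^2) ≤ β * (x n * (y n - x n)) :=
          mul_le_mul_of_nonneg_left h6 hβ.le
        rw [div_mul_eq_mul_div, le_div_iff₀ (by positivity : (0:ℝ) < β * r 0)]
        nlinarith [h1, h7]
      · have := hdlim.const_mul (1 / (β * r 0))
        simpa using this
    have hsqrt := (Real.continuous_sqrt.tendsto 0).comp hsq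
    simp only [Function.comp_def, Real.sqrt_zero] at hsqrt
    apply hsqrt.congr
    intro n
    rw [Real.sqrt_sq_eq_abs, abs_sub_comm]
  · -- degenerate case: some y N = 0, then everything is eventually 0
    push_neg at hpos
    obtain ⟨N, hN⟩ := hpos
    have hyN : y N = 0 := le_antisymm hN (hyI N).1
    have hzero : ∀ n, N ≤ n → y n = 0 := by
      intro n hn
      induction n, hn using Nat.le_induction with
      | base => exact hyN
      | succ n hn ih => rw [hys n, ih, hf0]
    have hev : ∀ n, N ≤ n → |x n - y n| = 0 := by
      intro n hn
      have hy := hzero n hn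
      have hx : x n = 0 := le_antisymm (hy ▸ hle n) (hxI n).1
      rw [hx, hy]; simp
    apply Filter.Tendsto.congr' _ (tendsto_const_nhds (x := (0:ℝ)))
    filter_upwards [Filter.eventually_ge_atTop N] with n hn
    exact (hev n hn).symm

theorem monotone_equiconcave_contraction (a β : ℝ) (ha : 0 < a) (hβ : 0 < β)
    (f : ℕ → ℝ → ℝ)
    (hmap : ∀ n, MapsTo (f n) (Icc 0 a) (Icc 0 a))
    (hcont : ∀ n, ContinuousOn (f n) (Icc 0 a))
    (hmono : ∀ n, MonotoneOn (f n) (Icc 0 a))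
    (hf0 : ∀ n, f n 0 = 0)
    (hconc : ∀ n, ConcaveOn ℝ (Icc 0 a)
      (fun x => f n x + β * sSup (f n '' Icc 0 a) * x ^ 2))
    (x y : ℕ → ℝ) (hx0 : x 0 ∈ Ioc (0:ℝ) a) (hy0 : y 0 ∈ Ioc (0:ℝ) a)
    (hxs : ∀ n, x (n + 1) = f (n + 1) (x n))
    (hys : ∀ n, y (n + 1) = f (n + 1) (y n)) :
    Filter.Tendsto (fun n => |x n - y n|) Filter.atTop (nhds 0) := by
  rcases le_total (x 0) (y 0) with h | h
  · exact aux_contraction a β ha hβ f hmap hmono hf0 hconc x y hx0 hy0 hxs hys h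
  · have := aux_contraction a β ha hβ f hmap hmono hf0 hconc y x hy0 hx0 hys hxs h
    apply this.congr
    intro n
    exact abs_sub_comm _ _
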